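/- If G is a finite simple graph with maximum degree exactly 4, then G admits a locally irregular total coloring with 5 colors, i.e., tlir(G) ≤ 5. -/

import Mathlib

open Finset
open scoped Classical

variable {V : Type*}

/-- The total degree of a vertex `v` in color `i`, given a vertex coloring `cV` and an
edge coloring `cE` of a graph `G` with `k` colors: the number of edges of color `i`
incident to `v`, plus `1` if `v` itself has color `i`. -/
noncomputable def totalDeg [Fintype V] (G : SimpleGraph V) {k : ℕ}
    (cV : V → Fin k) (cE : Sym2 V → Fin k) (i : Fin k) (v : V) : ℕ :=
  (univ.filter fun u => G.Adj v u ∧ cE s(v, u) = i).card + (if cV v = i then 1 else 0)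

/-- `(cV, cE)` is a locally irregular total coloring of `G`: for every edge `uv`,
the total degrees of `u` and `v` in the color of `uv` are distinct. -/
def IsTLIR [Fintype V] (G : SimpleGraph V) {k : ℕ}
    (cV : V → Fin k) (cE : Sym2 V → Fin k) : Prop :=
  ∀ u v, G.Adj u v →
    totalDeg G cV cE (cE s(u, v)) u ≠ totalDeg G cV cE (cE s(u, v)) v

/-- `G` admits a locally irregular total coloring with `k` colors, i.e. `tlir(G) ≤ k`. -/
def HasTLIR [Fintype V] (G : SimpleGraph V) (k : ℕ) : Prop :=
  ∃ (cV : V → Fin k) (cE : Sym2 V → Fin k), IsTLIR G cV cE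




private lemma exists_proper [Fintype V] (G : SimpleGraph V) [DecidableRel G.Adj]
    (hdeg : ∀ v, G.degree v ≤ 4) :
    ∃ σ : V → Fin 5, ∀ ⦃u v : V⦄, G.Adj u v → σ u ≠ σ v := by
  classical
  suffices h : ∀ s : Finset V, ∃ σ : V → Fin 5, ∀ u ∈ s, ∀ v ∈ s, G.Adj u v → σ u ≠ σ v by
    obtain ⟨σ, hσ⟩ := h univ
    exact ⟨σ, fun u v h' => hσ u (mem_univ u) v (mem_univ v) h'⟩
  intro s
  induction s using Finset.induction_on with
  | empty => exact ⟨fun _ => 0, by simp⟩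
  | @insert a s ha ih =>
    obtain ⟨σ, hσ⟩ := ih
    have hsub : s.filter (G.Adj a) ⊆ G.neighborFinset a := by
      intro w hw
      rw [SimpleGraph.mem_neighborFinset]
      exact (mem_filter.mp hw).2
    have hcard : ((s.filter (G.Adj a)).image σ).card < 5 := by
      have h1 := Finset.card_image_le (f := σ) (s := s.filter (G.Adj a))
      have h2 := Finset.card_le_card hsub
      have h3 : #(G.neighborFinset a) = G.degree a := rfl
      have h4 := hdeg a
      omega
    have hex : ∃ c : Fin 5, c ∉ (s.filter (G.Adj a)).image σ := by
      have h2 : (((s.filter (G.Adj a)).image σ)ᶜ).Nonempty := by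
        rw [← Finset.card_pos, Finset.card_compl]
        have : Fintype.card (Fin 5) = 5 := by simp
        omega
      obtain ⟨c, hc⟩ := h2
      exact ⟨c, Finset.mem_compl.mp hc⟩
    obtain ⟨c, hc⟩ := hex
    refine ⟨Function.update σ a c, ?_⟩
    have hupd : ∀ x ∈ s, Function.update σ a c x = σ x := by
      intro x hx
      have hxa : x ≠ a := fun h => ha (h ▸ hx)
      exact Function.update_of_ne hxa _ _
    intro u hu v hv hadj
    rcases Finset.mem_insert.mp hu with rfl | hu'
    · rcases Finset.mem_insert.mp hv with rfl | hv'
      · exact absurd hadj (G.irrefl)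
      · rw [Function.update_self, hupd v hv']
        intro h
        exact hc (h ▸ Finset.mem_image_of_mem σ (mem_filter.mpr ⟨hv', hadj⟩))
    · rcases Finset.mem_insert.mp hv with rfl | hv'
      · rw [Function.update_self, hupd u hu']
        intro h
        exact hc (h ▸ Finset.mem_image_of_mem σ (mem_filter.mpr ⟨hu', hadj.symm⟩))
      · rw [hupd u hu', hupd v hv']
        exact hσ u hu' v hv' hadj



lemma exists_pair_of_card_le_two {α : Type*} (x0 : α) {S : Finset α} (h : S.card ≤ 2) :
    ∃ a b : α, ∀ w ∈ S, w = a ∨ w = b := by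
  classical
  by_cases hS : S.Nonempty
  · obtain ⟨a, ha⟩ := hS
    have h1 : (S.erase a).card ≤ 1 := by
      have := Finset.card_erase_of_mem ha
      omega
    by_cases hS' : (S.erase a).Nonempty
    · obtain ⟨b, hb⟩ := hS'
      refine ⟨a, b, fun w hw => ?_⟩
      by_cases hwa : w = a
      · exact Or.inl hwa
      · have hw' : w ∈ S.erase a := Finset.mem_erase.mpr ⟨hwa, hw⟩
        exact Or.inr (Finset.card_le_one.mp h1 _ hw' _ hb)
    · refine ⟨a, a, fun w hw => ?_⟩
      by_cases hwa : w = a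
      · exact Or.inl hwa
      · exact absurd ⟨w, Finset.mem_erase.mpr ⟨hwa, hw⟩⟩ hS'
  · exact ⟨x0, x0, fun w hw => absurd ⟨w, hw⟩ hS⟩

lemma exists_head [Fintype V] (G : SimpleGraph V) [DecidableRel G.Adj]
    (hdeg : ∀ v, G.degree v ≤ 4) :
    ∃ head : Sym2 V → V,
      (∀ ⦃u v : V⦄, G.Adj u v → head s(u, v) = u ∨ head s(u, v) = v) ∧
      ∀ v : V, ∃ a b : V, ∀ w, G.Adj v w → head s(v, w) = v → w = a ∨ w = b := by
  classical
  set t : {e : Sym2 V // e ∈ G.edgeFinset} → Finset (V × Fin 2) :=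
    fun e => univ.filter fun p => p.1 ∈ (e : Sym2 V) with ht
  have hrep : ∀ z : Sym2 V, ∃ a b, z = s(a, b) := fun z => z.ind (fun a b => ⟨a, b, rfl⟩)
  have hall : ∀ s : Finset {e : Sym2 V // e ∈ G.edgeFinset}, s.card ≤ (s.biUnion t).card := by
    intro s
    set supp : Finset V := univ.filter (fun v : V => ∃ e ∈ s, v ∈ ((e : {e : Sym2 V // e ∈ G.edgeFinset}) : Sym2 V)) with hsupp
    have hbu : s.biUnion t = supp ×ˢ (univ : Finset (Fin 2)) := by
      ext p
      simp only [Finset.mem_biUnion, ht, Finset.mem_filter, Finset.mem_univ, true_and,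
        Finset.mem_product, hsupp]
      constructor
      · rintro ⟨e, he, hpe⟩; exact ⟨⟨e, he, hpe⟩, trivial⟩
      · rintro ⟨⟨e, he, hpe⟩, -⟩; exact ⟨e, he, hpe⟩
    have hkey : ∀ e ∈ s, (supp.filter fun v => v ∈ ((e : {e : Sym2 V // e ∈ G.edgeFinset}) : Sym2 V)).card = 2 := by
      rintro ⟨e, hee⟩ hes
      obtain ⟨a, b, rfl⟩ := hrep e
      have hadj : G.Adj a b := by
        rw [SimpleGraph.mem_edgeFinset, SimpleGraph.mem_edgeSet] at hee
        exact hee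
      have : (supp.filter fun v => v ∈ s(a, b)) = {a, b} := by
        ext v
        simp only [Finset.mem_filter, Sym2.mem_iff, Finset.mem_insert, Finset.mem_singleton, hsupp,
          Finset.mem_univ, true_and]
        constructor
        · rintro ⟨-, h⟩; exact h
        · rintro (rfl | rfl)
          · exact ⟨⟨⟨s(v, b), hee⟩, hes, Sym2.mem_mk_left v b⟩, Or.inl rfl⟩
          · exact ⟨⟨⟨s(a, v), hee⟩, hes, Sym2.mem_mk_right a v⟩, Or.inr rfl⟩
      rw [this]
      exact Finset.card_pair hadj.ne
    have hsum1 : ∑ e ∈ s, (supp.filter fun v => v ∈ ((e : {e : Sym2 V // e ∈ G.edgeFinset}) : Sym2 V)).card = 2 * s.card := by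
      rw [Finset.sum_congr rfl hkey, Finset.sum_const, smul_eq_mul, mul_comm]
    have hswap : ∑ e ∈ s, (supp.filter fun v => v ∈ ((e : {e : Sym2 V // e ∈ G.edgeFinset}) : Sym2 V)).card
        = ∑ v ∈ supp, (s.filter fun e => v ∈ ((e : {e : Sym2 V // e ∈ G.edgeFinset}) : Sym2 V)).card := by
      simp_rw [Finset.card_filter]
      exact Finset.sum_comm
    have hbound : ∀ v ∈ supp, (s.filter fun e => v ∈ ((e : {e : Sym2 V // e ∈ G.edgeFinset}) : Sym2 V)).card ≤ 4 := by
      intro v _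
      have h1 : (s.filter fun e => v ∈ ((e : {e : Sym2 V // e ∈ G.edgeFinset}) : Sym2 V)).card
          ≤ (G.incidenceFinset v).card := by
        refine Finset.card_le_card_of_injOn (fun e => (e : Sym2 V)) ?_ ?_
        · intro e he
          rw [Finset.mem_coe, SimpleGraph.mem_incidenceFinset]
          rcases Finset.mem_filter.mp he with ⟨hes, hev⟩
          exact ⟨SimpleGraph.mem_edgeFinset.mp e.2, hev⟩
        · intro e1 _ e2 _ h
          exact Subtype.ext h
      rw [SimpleGraph.card_incidenceFinset_eq_degree] at h1
      exact le_trans h1 (hdeg v)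
    have h2s : 2 * s.card ≤ 4 * supp.card := by
      rw [← hsum1, hswap]
      calc ∑ v ∈ supp, (s.filter fun e => v ∈ ((e : {e : Sym2 V // e ∈ G.edgeFinset}) : Sym2 V)).card
          ≤ ∑ _v ∈ supp, 4 := Finset.sum_le_sum hbound
        _ = 4 * supp.card := by rw [Finset.sum_const, smul_eq_mul, mul_comm]
    rw [hbu, Finset.card_product]
    simp only [Finset.card_univ, Fintype.card_fin]
    omega
  obtain ⟨f, hfinj, hfmem⟩ := (Finset.all_card_le_biUnion_card_iff_exists_injective t).mp hall
  set head : Sym2 V → V := fun e =>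
    if he : e ∈ G.edgeFinset then (f ⟨e, he⟩).1 else e.out.1 with hhead_def
  have headmem : ∀ (e : Sym2 V) (he : e ∈ G.edgeFinset), head e = (f ⟨e, he⟩).1 := by
    intro e he
    rw [hhead_def]
    exact dif_pos he
  refine ⟨head, ?_, ?_⟩
  · intro u v hadj
    have he : s(u, v) ∈ G.edgeFinset := by
      rw [SimpleGraph.mem_edgeFinset, SimpleGraph.mem_edgeSet]; exact hadj
    rw [headmem _ he]
    have := hfmem ⟨s(u, v), he⟩
    rw [ht] at this
    simp only [Finset.mem_filter, Finset.mem_univ, true_and] at this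
    exact Sym2.mem_iff.mp this
  · intro v
    have hcard : (univ.filter fun w => G.Adj v w ∧ head s(v, w) = v).card ≤ 2 := ?_
    · obtain ⟨a, b, hab⟩ := exists_pair_of_card_le_two v hcard
      exact ⟨a, b, fun w h1 h2 => hab w (Finset.mem_filter.mpr ⟨Finset.mem_univ w, h1, h2⟩)⟩
    have hedge : ∀ w, G.Adj v w → s(v, w) ∈ G.edgeFinset := by
      intro w hw
      rw [SimpleGraph.mem_edgeFinset, SimpleGraph.mem_edgeSet]; exact hw
    have := Finset.card_le_card_of_injOn
      (f := fun w => if hw : s(v, w) ∈ G.edgeFinset then (f ⟨s(v, w), hw⟩).2 else 0)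
      (s := univ.filter fun w => G.Adj v w ∧ head s(v, w) = v)
      (t := (univ : Finset (Fin 2))) (fun a _ => Finset.mem_univ _) ?_
    · simpa using this
    · intro w1 hw1 w2 hw2 heq
      rcases Finset.mem_filter.mp (Finset.mem_coe.mp hw1) with ⟨-, hadj1, hh1⟩
      rcases Finset.mem_filter.mp (Finset.mem_coe.mp hw2) with ⟨-, hadj2, hh2⟩
      have he1 := hedge w1 hadj1
      have he2 := hedge w2 hadj2
      simp only [] at heq
      rw [dif_pos he1, dif_pos he2] at heq
      rw [headmem _ he1] at hh1
      rw [headmem _ he2] at hh2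
      have hf12 : f ⟨s(v, w1), he1⟩ = f ⟨s(v, w2), he2⟩ := by
        apply Prod.ext
        · rw [hh1, hh2]
        · exact heq
      have := hfinj hf12
      have : s(v, w1) = s(v, w2) := congrArg Subtype.val this
      exact Sym2.congr_right.mp this

lemma main_aux [Fintype V] (G : SimpleGraph V)
    (σ : V → Fin 5) (hσ : ∀ ⦃u v : V⦄, G.Adj u v → σ u ≠ σ v)
    (head : Sym2 V → V)
    (hhead : ∀ ⦃u v : V⦄, G.Adj u v → head s(u, v) = u ∨ head s(u, v) = v)
    (hin2 : ∀ v : V, ∃ a b : V, ∀ w, G.Adj v w → head s(v, w) = v → w = a ∨ w = b) :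
    HasTLIR G 5 := by
  have hin : ∀ v : V, (univ.filter fun w => G.Adj v w ∧ head s(v, w) = v).card ≤ 2 := by
    intro v
    obtain ⟨a, b, hab⟩ := hin2 v
    have hsub : (univ.filter fun w => G.Adj v w ∧ head s(v, w) = v) ⊆ {a, b} := by
      intro w hw
      rcases Finset.mem_filter.mp hw with ⟨-, h1, h2⟩
      rcases hab w h1 h2 with rfl | rfl
      · exact Finset.mem_insert_self _ _
      · exact Finset.mem_insert_of_mem (Finset.mem_singleton_self _)
    refine le_trans (Finset.card_le_card hsub) ?_
    refine le_trans (Finset.card_insert_le _ _) ?_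
    simp
  -- the tail of an edge: the endpoint other than the head
  set tail : Sym2 V → V := fun e => if h : head e ∈ e then Sym2.Mem.other' h else head e
    with htail
  have tail_spec : ∀ ⦃a b : V⦄, head s(a, b) = b → tail s(a, b) = a := by
    intro a b hh
    have hmem : head s(a, b) ∈ s(a, b) := by rw [hh]; exact Sym2.mem_mk_right a b
    rw [htail]
    dsimp only
    rw [dif_pos hmem]
    have key := Sym2.other_spec' hmem
    set x := Sym2.Mem.other' hmem with hx
    rw [hh] at key
    exact Sym2.congr_right.mp (key.trans Sym2.eq_swap)
  set cE : Sym2 V → Fin 5 := fun e => σ (tail e) with hcE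
  have cE_out : ∀ ⦃a b : V⦄, head s(a, b) = b → cE s(a, b) = σ a := by
    intro a b hh
    rw [hcE]
    dsimp only
    rw [tail_spec hh]
  have swap_head : ∀ (a b : V), head s(a, b) = head s(b, a) := by
    intro a b
    rw [Sym2.eq_swap]
  have cE_swap : ∀ (a b : V), cE s(a, b) = cE s(b, a) := by
    intro a b
    rw [Sym2.eq_swap]
  -- fresh colors avoiding own color and colors of in-neighbors
  have fresh_ex : ∀ x : V, ∃ c : Fin 5, c ≠ σ x ∧
      ∀ w, G.Adj x w → head s(x, w) = x → c ≠ σ w := by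
    intro x
    have himg : ((univ.filter fun w => G.Adj x w ∧ head s(x, w) = x).image σ).card ≤ 2 :=
      le_trans (Finset.card_image_le) (hin x)
    set F := insert (σ x) ((univ.filter fun w => G.Adj x w ∧ head s(x, w) = x).image σ) with hF
    have hFcard : F.card ≤ 3 := le_trans (Finset.card_insert_le _ _) (by omega)
    have hne : (Fᶜ).Nonempty := by
      rw [← Finset.card_pos, Finset.card_compl]
      have : Fintype.card (Fin 5) = 5 := by simp
      omega
    obtain ⟨c, hc⟩ := hne
    rw [Finset.mem_compl] at hc
    refine ⟨c, fun h => hc (h ▸ Finset.mem_insert_self _ _), fun w hw hh hcw => hc ?_⟩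
    rw [hF]
    exact Finset.mem_insert_of_mem
      (Finset.mem_image.mpr ⟨w, Finset.mem_filter.mpr ⟨mem_univ w, hw, hh⟩, hcw.symm⟩)
  choose fr hfr1 hfr2 using fresh_ex
  set P : V → Prop := fun x =>
    (univ.filter fun w => G.Adj x w ∧ head s(x, w) = w).card = 1 ∧
    ∃ w, G.Adj x w ∧ head s(x, w) = w ∧
      (univ.filter fun z => G.Adj w z ∧ head s(w, z) = w ∧ σ z = σ x).card = 2 with hP
  set τ : V → Fin 5 := fun x => if P x then fr x else σ x with hτ
  have τ_ne : ∀ ⦃a b : V⦄, G.Adj a b → head s(a, b) = b → τ b ≠ σ a := by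
    intro a b hab hh
    rw [hτ]
    dsimp only
    split
    · apply hfr2 b a hab.symm
      rw [show s(b, a) = s(a, b) from Sym2.eq_swap]
      exact hh
    · exact (hσ hab.symm)
  refine ⟨τ, cE, ?_⟩
  have key : ∀ ⦃u v : V⦄, G.Adj u v → head s(u, v) = v →
      totalDeg G τ cE (cE s(u, v)) u ≠ totalDeg G τ cE (cE s(u, v)) v := by
    intro u v hadj hh
    rw [cE_out hh]
    have cE_in : ∀ ⦃x w : V⦄, G.Adj x w → head s(x, w) = x → cE s(x, w) = σ w := by
      intro x w hxw h1
      rw [cE_swap]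
      apply cE_out
      rw [show s(w, x) = s(x, w) from Sym2.eq_swap]
      exact h1
    have hLfilter : (univ.filter fun w => G.Adj u w ∧ cE s(u, w) = σ u)
        = univ.filter fun w => G.Adj u w ∧ head s(u, w) = w := by
      ext w
      simp only [Finset.mem_filter, Finset.mem_univ, true_and]
      constructor
      · rintro ⟨hw, hc⟩
        rcases hhead hw with h1 | h1
        · exfalso
          have h2 : cE s(u, w) = σ w := cE_in hw h1
          exact hσ hw ((h2.symm.trans hc).symm)
        · exact ⟨hw, h1⟩
      · rintro ⟨hw, h1⟩
        exact ⟨hw, cE_out h1⟩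
    have hRfilter : (univ.filter fun w => G.Adj v w ∧ cE s(v, w) = σ u)
        = univ.filter fun w => G.Adj v w ∧ head s(v, w) = v ∧ σ w = σ u := by
      ext w
      simp only [Finset.mem_filter, Finset.mem_univ, true_and]
      constructor
      · rintro ⟨hw, hc⟩
        rcases hhead hw with h1 | h1
        · exact ⟨hw, h1, (cE_in hw h1).symm.trans hc⟩
        · exfalso
          have h2 : cE s(v, w) = σ v := cE_out h1
          exact hσ hadj ((h2.symm.trans hc).symm)
      · rintro ⟨hw, h1, h2⟩
        exact ⟨hw, (cE_in hw h1).trans h2⟩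
    unfold totalDeg
    rw [hLfilter, hRfilter]
    set A := (univ.filter fun w => G.Adj u w ∧ head s(u, w) = w).card with hA_def
    set q := (univ.filter fun w => G.Adj v w ∧ head s(v, w) = v ∧ σ w = σ u).card with hq_def
    have hv_bit : (if τ v = σ u then 1 else 0) = 0 := if_neg (τ_ne hadj hh)
    have hA1 : 1 ≤ A :=
      Finset.card_pos.mpr ⟨v, Finset.mem_filter.mpr ⟨mem_univ v, hadj, hh⟩⟩
    have hvu_head : head s(v, u) = v := by
      rw [show s(v, u) = s(u, v) from Sym2.eq_swap]; exact hh
    have hq1 : 1 ≤ q :=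
      Finset.card_pos.mpr ⟨u, Finset.mem_filter.mpr ⟨mem_univ u, hadj.symm, hvu_head, rfl⟩⟩
    have hq2 : q ≤ 2 := by
      refine le_trans (Finset.card_le_card ?_) (hin v)
      intro w hw
      rcases Finset.mem_filter.mp hw with ⟨hw0, hw1, hw2, -⟩
      exact Finset.mem_filter.mpr ⟨hw0, hw1, hw2⟩
    rw [hv_bit]
    by_cases hA : A = 1
    · by_cases hq : q = 2
      · have hPu : P u := ⟨hA, v, hadj, hh, hq⟩
        have hτu : τ u = fr u := by rw [hτ]; dsimp only; rw [if_pos hPu]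
        have hbit : (if τ u = σ u then 1 else 0) = 0 := by
          rw [hτu]; exact if_neg (hfr1 u)
        rw [hbit]
        omega
      · have hq1' : q = 1 := by omega
        have hPu : ¬ P u := by
          rintro ⟨hc1, w, hw1, hw2, hw3⟩
        -- w must equal v
          have hmemw : w ∈ univ.filter fun z => G.Adj u z ∧ head s(u, z) = z :=
            Finset.mem_filter.mpr ⟨mem_univ w, hw1, hw2⟩
          have hmemv : v ∈ univ.filter fun z => G.Adj u z ∧ head s(u, z) = z :=
            Finset.mem_filter.mpr ⟨mem_univ v, hadj, hh⟩
          have hwv : w = v := by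
            have hle : (univ.filter fun z => G.Adj u z ∧ head s(u, z) = z).card ≤ 1 := le_of_eq hA
            exact Finset.card_le_one.mp hle _ hmemw _ hmemv
          rw [hwv] at hw3
          omega
        have hτu : τ u = σ u := by rw [hτ]; dsimp only; rw [if_neg hPu]
        have hbit : (if τ u = σ u then 1 else 0) = 1 := if_pos hτu
        rw [hbit]
        omega
    · have hPu : ¬ P u := fun hp => hA hp.1
      have hτu : τ u = σ u := by rw [hτ]; dsimp only; rw [if_neg hPu]
      have hbit : (if τ u = σ u then 1 else 0) = 1 := if_pos hτu
      rw [hbit]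
      omega
  intro u v hadj
  rcases hhead hadj with h | h
  · have h' : head s(v, u) = u := by
      rw [show s(v, u) = s(u, v) from Sym2.eq_swap]; exact h
    have hk := key hadj.symm h'
    rw [show s(v, u) = s(u, v) from Sym2.eq_swap] at hk
    exact hk.symm
  · exact key hadj h

/-- Every finite simple graph with maximum degree exactly 4 admits a
locally irregular total coloring with 5 colors, i.e. `tlir(G) ≤ 5`. -/
theorem stmt10 {V : Type*} [Fintype V] (G : SimpleGraph V) [DecidableRel G.Adj]
    (hmax : G.maxDegree = 4) : HasTLIR G 5 := by
  classical
  have hdeg : ∀ v, G.degree v ≤ 4 := fun v => hmax ▸ G.degree_le_maxDegree v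
  obtain ⟨σ, hσ⟩ := exists_proper G hdeg
  obtain ⟨head, hhead, hin2⟩ := exists_head G hdeg
  exact main_aux G σ hσ head hhead hin2
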